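/- Let Q ⊆ ℝ² be the convex hull of a finite set of points (a closed convex polygon with its interior). If finitely many open half-planes cover Q, then some subfamily of at most 3 of these half-planes also covers Q. -/
import Mathlib

open Set Module

theorem stmt_2 (P : Finset (Fin 2 → ℝ)) (n : ℕ)
    (a : Fin n → (Fin 2 → ℝ)) (c : Fin n → ℝ) (ha : ∀ i, a i ≠ 0)
    (hcov : convexHull ℝ (↑P : Set (Fin 2 → ℝ)) ⊆
      ⋃ i, {x : Fin 2 → ℝ | ∑ k, a i k * x k < c i}) :
    ∃ t : Finset (Fin n), t.card ≤ 3 ∧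
      convexHull ℝ (↑P : Set (Fin 2 → ℝ)) ⊆
        ⋃ i ∈ t, {x : Fin 2 → ℝ | ∑ k, a i k * x k < c i} := by
  classical
  set Q : Set (Fin 2 → ℝ) := convexHull ℝ (↑P : Set (Fin 2 → ℝ)) with hQ
  rcases Q.eq_empty_or_nonempty with hQe | hQne
  · exact ⟨∅, by simp, by simp [hQe]⟩
  set F : Fin n → Set (Fin 2 → ℝ) := fun i => Q ∩ {x | c i ≤ ∑ k, a i k * x k} with hF
  have hconv : ∀ i, Convex ℝ (F i) := by
    intro i
    refine (convex_convexHull ℝ _).inter ?_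
    exact convex_halfSpace_ge ⟨fun x y => by simp [Finset.sum_add_distrib, mul_add],
      fun r x => by simp [Finset.mul_sum, mul_left_comm, mul_assoc, mul_add]⟩ (c i)
  have hempty : (⋂ i ∈ (Finset.univ : Finset (Fin n)), F i) = ∅ := by
    ext x
    simp only [Set.mem_iInter, Set.mem_empty_iff_false, iff_false]
    intro hx
    obtain ⟨y, hy⟩ := hQne
    have hy' := hcov hy
    simp only [Set.mem_iUnion] at hy'
    obtain ⟨i0, _⟩ := hy'
    have hxQ : x ∈ Q := (hx i0 (Finset.mem_univ _)).1
    have hx' := hcov hxQ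
    simp only [Set.mem_iUnion, Set.mem_setOf_eq] at hx'
    obtain ⟨i, hi⟩ := hx'
    exact absurd (hx i (Finset.mem_univ i)).2 (not_le.mpr hi)
  -- contrapositive of Helly
  by_contra hcon
  push_neg at hcon
  have hint : ∀ I ⊆ (Finset.univ : Finset (Fin n)),
      I.card ≤ finrank ℝ (Fin 2 → ℝ) + 1 → (⋂ i ∈ I, F i).Nonempty := by
    intro I _ hIcard
    have hIcard3 : I.card ≤ 3 := by simpa using hIcard
    have hns := hcon I hIcard3
    rw [Set.not_subset] at hns
    obtain ⟨x, hxQ, hxn⟩ := hns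
    refine ⟨x, ?_⟩
    simp only [Set.mem_iInter]
    intro i hiI
    refine ⟨hxQ, ?_⟩
    simp only [Set.mem_iUnion] at hxn
    push_neg at hxn
    have := hxn i hiI
    simpa using this
  have := Convex.helly_theorem' (s := (Finset.univ : Finset (Fin n)))
    (fun i _ => hconv i) hint
  rw [hempty] at this
  exact this.ne_empty rfl
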